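/- Let X be a locally compact Hausdorff space, μ a regular Borel measure on X, 1 < p < ∞, and f, g ∈ L^p(X,μ). Then the pointwise product f·g belongs to L^p(X,μ) if, and only if, there exists a sequence (g_n) in C_0(X) such that g_n → g in L^p(X,μ) and the sequence (f·g_n) converges in L^p(X,μ); in that case the limit of (f·g_n) is f·g. -/

import Mathlib

open MeasureTheory ENNReal Filter Topology
open scoped ZeroAtInfty

private lemma limit_unique_aux {X : Type*} [MeasurableSpace X] [TopologicalSpace X]
    [OpensMeasurableSpace X]
    {μ : Measure X} {p : ℝ≥0∞} (hp0 : p ≠ 0)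
    {f g : X → ℂ} (hf : AEStronglyMeasurable f μ) (hg : AEStronglyMeasurable g μ)
    (gn : ℕ → C₀(X, ℂ)) (h : X → ℂ) (hh : AEStronglyMeasurable h μ)
    (h1 : Tendsto (fun n => eLpNorm (fun x => g x - gn n x) p μ) atTop (𝓝 0))
    (h2 : Tendsto (fun n => eLpNorm (fun x => f x * gn n x - h x) p μ) atTop (𝓝 0)) :
    h =ᵐ[μ] fun x => f x * g x := by
  set F : ℕ → X → ℂ := fun n x => gn n x with hF
  set G : ℕ → X → ℂ := fun n x => f x * gn n x with hG
  have hFm : ∀ n, AEStronglyMeasurable (F n) μ :=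
    fun n => ((gn n).continuous).aestronglyMeasurable
  have hGm : ∀ n, AEStronglyMeasurable (G n) μ := fun n => hf.mul (hFm n)
  have h1' : Tendsto (fun n => eLpNorm (F n - g) p μ) atTop (𝓝 0) := by
    have e : (fun n => eLpNorm (F n - g) p μ)
        = fun n => eLpNorm (fun x => g x - gn n x) p μ := by
      funext n; exact eLpNorm_sub_comm (F n) g p μ
    rw [e]; exact h1
  have tim1 : TendstoInMeasure μ F atTop g :=
    tendstoInMeasure_of_tendsto_eLpNorm hp0 hFm hg h1'
  obtain ⟨ns, hns, hae1⟩ := tim1.exists_seq_tendsto_ae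
  have h2' : Tendsto (fun n => eLpNorm (G n - h) p μ) atTop (𝓝 0) := h2
  have tim2 : TendstoInMeasure μ G atTop h :=
    tendstoInMeasure_of_tendsto_eLpNorm hp0 hGm hh h2'
  have tim2' : TendstoInMeasure μ (fun i => G (ns i)) atTop h :=
    fun ε hε => (tim2 ε hε).comp hns.tendsto_atTop
  obtain ⟨ms, hms, hae2⟩ := tim2'.exists_seq_tendsto_ae
  filter_upwards [hae1, hae2] with x hx1 hx2
  have hx1' : Tendsto (fun i => F (ns (ms i)) x) atTop (𝓝 (g x)) :=
    hx1.comp hms.tendsto_atTop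
  have hmul : Tendsto (fun i => G (ns (ms i)) x) atTop (𝓝 (f x * g x)) := by
    simpa [hG, hF] using hx1'.const_mul (f x)
  exact tendsto_nhds_unique hx2 hmul

private lemma exists_cc_approx {X : Type*} [MeasurableSpace X] [TopologicalSpace X]
    [LocallyCompactSpace X] [T2Space X] [BorelSpace X]
    (ρ : Measure X) [ρ.Regular] {p : ℝ≥0∞} (hp0 : p ≠ 0) (hp2 : p ≠ ∞)
    {g : X → ℂ} (hg : MemLp g p ρ) {ε : ℝ≥0∞} (hε : ε ≠ 0) :
    ∃ φ : X → ℂ, eLpNorm (g - φ) p ρ ≤ ε ∧ Continuous φ ∧ HasCompactSupport φ := by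
  refine hg.induction_dense hp2 (fun φ => Continuous φ ∧ HasCompactSupport φ) ?_ ?_ ?_ hε
  · intro c s hs hsfin ε' hε'
    rcases eq_or_ne c 0 with rfl | hc
    · refine ⟨0, ?_, continuous_const, ?_⟩
      · simp only [Set.indicator_zero', Pi.zero_def, sub_zero]
        simp [eLpNorm_zero]
      · simp [HasCompactSupport, tsupport, Function.support]
    have hcn0 : (‖c‖₊ : ℝ≥0∞) ≠ 0 := by simpa using hc
    have hcnt : (‖c‖₊ : ℝ≥0∞) ≠ ∞ := ENNReal.coe_ne_top
    set δ : ℝ≥0∞ := (ε' / (‖c‖₊ : ℝ≥0∞)) ^ p.toReal with hδdef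
    have hptpos : 0 < p.toReal := ENNReal.toReal_pos hp0 hp2
    have hδ0 : δ ≠ 0 := by
      rw [hδdef]
      simp only [ne_eq, ENNReal.rpow_eq_zero_iff, not_or, not_and, not_lt]
      constructor
      · intro hdiv
        exact absurd hdiv (by simp [ENNReal.div_eq_zero_iff, hε, hε', hcnt])
      · intro _; exact hptpos.le
    have hδ2 : δ / 2 ≠ 0 := by
      simp [ENNReal.div_eq_zero_iff, hδ0]
    obtain ⟨K, hKs, hKc, hK⟩ := hs.exists_isCompact_diff_lt hsfin.ne hδ2
    obtain ⟨U, hsU, hUo, hUfin, hU⟩ := hs.exists_isOpen_diff_lt hsfin.ne hδ2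
    obtain ⟨φ, hφ1, hφ0, hφsupp, hφ01⟩ :=
      exists_continuous_one_zero_of_isCompact hKc hUo.isClosed_compl
        (Set.disjoint_compl_right_iff_subset.mpr (hKs.trans hsU))
    refine ⟨fun x => φ x • c, ?_, φ.continuous.smul continuous_const,
      hφsupp.comp_left (g := fun z : ℝ => z • c) (zero_smul ℝ c)⟩
    have hb : ∀ x, ‖((fun x => φ x • c) - s.indicator fun _ => c) x‖
        ≤ ‖(U \ K).indicator (fun _ => c) x‖ := by
      intro x
      simp only [Pi.sub_apply]
      by_cases hxK : x ∈ K
      · rw [hφ1 hxK, Set.indicator_of_mem (hKs hxK)]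
        simp
      by_cases hxU : x ∈ U
      · have hmem : x ∈ U \ K := ⟨hxU, hxK⟩
        rw [Set.indicator_of_mem hmem]
        obtain ⟨h0, h1⟩ := hφ01 x
        by_cases hxs : x ∈ s
        · rw [Set.indicator_of_mem hxs]
          have : φ x • c - c = (φ x - 1) • c := by
            rw [sub_smul, one_smul]
          rw [this, norm_smul, Real.norm_eq_abs]
          have : |φ x - 1| ≤ 1 := by rw [abs_le]; constructor <;> linarith
          calc |φ x - 1| * ‖c‖ ≤ 1 * ‖c‖ :=
            mul_le_mul_of_nonneg_right this (norm_nonneg _)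
          _ = ‖c‖ := one_mul _
        · rw [Set.indicator_of_notMem hxs, sub_zero, norm_smul, Real.norm_eq_abs]
          have habs : |φ x| ≤ 1 := by rw [abs_le]; constructor <;> linarith
          calc |φ x| * ‖c‖ ≤ 1 * ‖c‖ :=
            mul_le_mul_of_nonneg_right habs (norm_nonneg _)
          _ = ‖c‖ := one_mul _
      · have hxs : x ∉ s := fun hxs => hxU (hsU hxs)
        rw [hφ0 hxU, Set.indicator_of_notMem hxs]
        simp
    have hρUK : ρ (U \ K) ≤ δ := by
      have hsplit : U \ K ⊆ (U \ s) ∪ (s \ K) := by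
        intro x hx
        by_cases hxs : x ∈ s
        · exact Or.inr ⟨hxs, hx.2⟩
        · exact Or.inl ⟨hx.1, hxs⟩
      calc ρ (U \ K) ≤ ρ ((U \ s) ∪ (s \ K)) := measure_mono hsplit
      _ ≤ ρ (U \ s) + ρ (s \ K) := measure_union_le _ _
      _ ≤ δ / 2 + δ / 2 := add_le_add hU.le hK.le
      _ = δ := ENNReal.add_halves _
    refine le_trans (eLpNorm_mono hb) ?_
    rw [eLpNorm_indicator_const (hUo.measurableSet.diff hKc.measurableSet) hp0 hp2]
    calc (‖c‖₊ : ℝ≥0∞) * ρ (U \ K) ^ (1 / p.toReal)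
        ≤ (‖c‖₊ : ℝ≥0∞) * δ ^ (1 / p.toReal) := by
          exact mul_le_mul_right (ENNReal.rpow_le_rpow hρUK (by positivity)) _
    _ = (‖c‖₊ : ℝ≥0∞) * (ε' / (‖c‖₊ : ℝ≥0∞)) := by
          rw [hδdef, ← ENNReal.rpow_mul, mul_one_div_cancel hptpos.ne', ENNReal.rpow_one]
    _ = ε' := ENNReal.mul_div_cancel hcn0 hcnt
  · rintro u v ⟨cu, su⟩ ⟨cv, sv⟩
    exact ⟨cu.add cv, su.add sv⟩
  · rintro u ⟨cu, -⟩
    exact cu.aestronglyMeasurable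

private lemma approx_step {X : Type*} [MeasurableSpace X] [TopologicalSpace X]
    [LocallyCompactSpace X] [T2Space X] [BorelSpace X]
    (μ : Measure X) [μ.Regular] (p : ℝ≥0∞) (hp0 : p ≠ 0) (hp2 : p ≠ ∞)
    (f g : X → ℂ) (hf : MemLp f p μ) (hg : MemLp g p μ)
    (hfg : MemLp (fun x => f x * g x) p μ) {ε : ℝ≥0∞} (hε : ε ≠ 0) :
    ∃ φ : X → ℂ, Continuous φ ∧ HasCompactSupport φ ∧
      eLpNorm (fun x => g x - φ x) p μ ≤ ε ∧
      eLpNorm (fun x => f x * g x - f x * φ x) p μ ≤ ε := by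
  obtain ⟨f', hf'm, hff'⟩ := hf.1
  set w : X → ℝ≥0∞ := fun x => (‖f' x‖₊ : ℝ≥0∞) ^ p.toReal with hw
  have hwm : Measurable w :=
    (hf'm.measurable.nnnorm.coe_nnreal_ennreal).pow_const _
  have hwint : ∫⁻ x, w x ∂μ ≠ ∞ := by
    have h1 : ∫⁻ x, (‖f x‖₊ : ℝ≥0∞) ^ p.toReal ∂μ < ∞ :=
      lintegral_rpow_enorm_lt_top_of_eLpNorm_lt_top hp0 hp2 hf.2
    have h2 : ∫⁻ x, w x ∂μ = ∫⁻ x, (‖f x‖₊ : ℝ≥0∞) ^ p.toReal ∂μ := by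
      refine lintegral_congr_ae (hff'.mono fun x hx => ?_)
      simp only [hw, hx]
    rw [h2]; exact h1.ne
  set ν : Measure X := μ.withDensity w with hν
  set ρ : Measure X := μ + ν with hρ
  have hρ_apply : ∀ s : Set X, ρ s = μ s + ν s := fun s => rfl
  -- finiteness on compacts
  have hρc : IsFiniteMeasureOnCompacts ρ := by
    constructor
    intro K hK
    have hν' : ν K ≤ ∫⁻ x, w x ∂μ := by
      rw [hν, withDensity_apply w hK.measurableSet]
      exact setLIntegral_le_lintegral _ _
    rw [hρ_apply]
    exact ENNReal.add_lt_top.2 ⟨hK.measure_lt_top, lt_of_le_of_lt hν' hwint.lt_top⟩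
  -- outer regularity
  have hρo : Measure.OuterRegular ρ := by
    constructor
    intro A hA r hr
    have hρA : ρ A ≠ ∞ := hr.ne_top
    have hμA : μ A ≠ ∞ := by
      intro hcon
      apply hρA
      rw [hρ_apply, hcon, top_add]
    obtain ⟨ε', hε'0, hε'⟩ := ENNReal.lt_iff_exists_add_pos_lt.mp hr
    have hε2 : ((ε' : ℝ≥0∞) / 2) ≠ 0 := by
      simp [ENNReal.div_eq_zero_iff, hε'0.ne']
    obtain ⟨δ, hδ0, hδ⟩ := exists_pos_setLIntegral_lt_of_measure_lt hwint hε2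
    have hm0 : min δ ((ε' : ℝ≥0∞) / 2) ≠ 0 := by
      simp only [ne_eq, min_eq_iff, not_or]
      constructor <;> rintro ⟨h', -⟩
      · exact hδ0.ne' h'
      · exact hε2 h'
    obtain ⟨U, hAU, hUo, hU⟩ := Set.exists_isOpen_lt_add A hμA hm0
    have hdiff : μ (U \ A) < min δ ((ε' : ℝ≥0∞) / 2) := by
      rw [measure_diff hAU hA.nullMeasurableSet hμA,
        ENNReal.sub_lt_iff_lt_right hμA (measure_mono hAU)]
      calc μ U < μ A + min δ ((ε' : ℝ≥0∞) / 2) := hU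
      _ = min δ ((ε' : ℝ≥0∞) / 2) + μ A := add_comm _ _
    have hνd : ν (U \ A) < (ε' : ℝ≥0∞) / 2 := by
      rw [hν, withDensity_apply w (hUo.measurableSet.diff hA)]
      exact hδ _ (hdiff.trans_le (min_le_left _ _))
    have hμd : μ (U \ A) < (ε' : ℝ≥0∞) / 2 := hdiff.trans_le (min_le_right _ _)
    refine ⟨U, hAU, hUo, ?_⟩
    have hsub : ρ U ≤ ρ A + ρ (U \ A) := by
      calc ρ U = ρ (A ∪ U \ A) := by rw [Set.union_diff_cancel hAU]
      _ ≤ ρ A + ρ (U \ A) := measure_union_le _ _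
    have hρd : ρ (U \ A) < (ε' : ℝ≥0∞) := by
      rw [hρ_apply]
      calc μ (U \ A) + ν (U \ A) < (ε' : ℝ≥0∞) / 2 + (ε' : ℝ≥0∞) / 2 :=
        ENNReal.add_lt_add hμd hνd
      _ = (ε' : ℝ≥0∞) := ENNReal.add_halves _
    calc ρ U ≤ ρ A + ρ (U \ A) := hsub
    _ < ρ A + (ε' : ℝ≥0∞) := ENNReal.add_lt_add_left hρA hρd
    _ < r := hε'
  -- inner regularity
  have hρi : ρ.InnerRegularWRT IsCompact IsOpen := by
    intro U hU r hr
    rcases lt_or_ge r (μ U) with hcase | hcase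
    · obtain ⟨K, hKU, hKc, hK⟩ := Measure.Regular.innerRegular hU r hcase
      refine ⟨K, hKU, hKc, lt_of_lt_of_le hK ?_⟩
      rw [hρ_apply]; exact le_self_add
    · have hrne : r ≠ ∞ := hr.ne_top
      have hμU : μ U ≠ ∞ := (hcase.trans_lt hrne.lt_top).ne
      obtain ⟨ε', hε'0, hε'⟩ := ENNReal.lt_iff_exists_add_pos_lt.mp hr
      have hε2 : ((ε' : ℝ≥0∞) / 2) ≠ 0 := by
        simp [ENNReal.div_eq_zero_iff, hε'0.ne']
      obtain ⟨δ, hδ0, hδ⟩ := exists_pos_setLIntegral_lt_of_measure_lt hwint hε2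
      have hm0 : min δ ((ε' : ℝ≥0∞) / 2) ≠ 0 := by
        simp only [ne_eq, min_eq_iff, not_or]
        constructor <;> rintro ⟨h', -⟩
        · exact hδ0.ne' h'
        · exact hε2 h'
      obtain ⟨K, hKU, hKc, hK⟩ := hU.measurableSet.exists_isCompact_lt_add hμU hm0
      have hμK : μ K ≠ ∞ := (lt_of_le_of_lt (measure_mono hKU) hμU.lt_top).ne
      have hdiff : μ (U \ K) < min δ ((ε' : ℝ≥0∞) / 2) := by
        rw [measure_diff hKU hKc.measurableSet.nullMeasurableSet hμK,
          ENNReal.sub_lt_iff_lt_right hμK (measure_mono hKU)]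
        calc μ U < μ K + min δ ((ε' : ℝ≥0∞) / 2) := hK
        _ = min δ ((ε' : ℝ≥0∞) / 2) + μ K := add_comm _ _
      have hνd : ν (U \ K) < (ε' : ℝ≥0∞) / 2 := by
        rw [hν, withDensity_apply w (hU.measurableSet.diff hKc.measurableSet)]
        exact hδ _ (hdiff.trans_le (min_le_left _ _))
      have hμd : μ (U \ K) < (ε' : ℝ≥0∞) / 2 := hdiff.trans_le (min_le_right _ _)
      have hρd : ρ (U \ K) < (ε' : ℝ≥0∞) := by
        rw [hρ_apply]
        calc μ (U \ K) + ν (U \ K) < (ε' : ℝ≥0∞) / 2 + (ε' : ℝ≥0∞) / 2 :=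
          ENNReal.add_lt_add hμd hνd
        _ = (ε' : ℝ≥0∞) := ENNReal.add_halves _
      refine ⟨K, hKU, hKc, ?_⟩
      have hsub : ρ U ≤ ρ K + ρ (U \ K) := by
        calc ρ U = ρ (K ∪ U \ K) := by rw [Set.union_diff_cancel hKU]
        _ ≤ ρ K + ρ (U \ K) := measure_union_le _ _
      have hfin : r + (ε' : ℝ≥0∞) < ρ K + (ε' : ℝ≥0∞) := by
        calc r + (ε' : ℝ≥0∞) < ρ U := hε'
        _ ≤ ρ K + ρ (U \ K) := hsub
        _ ≤ ρ K + (ε' : ℝ≥0∞) := add_le_add_right hρd.le _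
      exact (ENNReal.add_lt_add_iff_right ENNReal.coe_ne_top).mp hfin
  haveI : IsFiniteMeasureOnCompacts ρ := hρc
  haveI : Measure.OuterRegular ρ := hρo
  haveI hρr : ρ.Regular := ⟨hρi⟩
  -- key lintegral identity
  have key : ∀ u : X → ℂ, AEStronglyMeasurable u μ →
      ∫⁻ x, (‖u x‖₊ : ℝ≥0∞) ^ p.toReal ∂ν
        = ∫⁻ x, (‖f x * u x‖₊ : ℝ≥0∞) ^ p.toReal ∂μ := by
    intro u hu
    rw [hν, lintegral_withDensity_eq_lintegral_mul₀ hwm.aemeasurable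
      (hu.aemeasurable.nnnorm.coe_nnreal_ennreal.pow_const _)]
    refine lintegral_congr_ae (hff'.mono fun x hx => ?_)
    simp only [Pi.mul_apply, hw, nnnorm_mul, ENNReal.coe_mul,
      ENNReal.mul_rpow_of_nonneg _ _ ENNReal.toReal_nonneg, hx]
  have hgρ : MemLp g p ρ := by
    refine ⟨hg.1.add_measure
      (AEStronglyMeasurable.mono_ac (withDensity_absolutelyContinuous μ w) hg.1), ?_⟩
    rw [eLpNorm_eq_lintegral_rpow_enorm_toReal hp0 hp2]
    refine ENNReal.rpow_lt_top_of_nonneg (by positivity) ?_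
    rw [hρ, lintegral_add_measure]
    refine (ENNReal.add_lt_top.2 ⟨?_, ?_⟩).ne
    · exact lintegral_rpow_enorm_lt_top_of_eLpNorm_lt_top hp0 hp2 hg.2
    · simp only [enorm_eq_nnnorm]
      rw [key g hg.1]
      exact lintegral_rpow_enorm_lt_top_of_eLpNorm_lt_top hp0 hp2 hfg.2
  obtain ⟨φ, φnorm, φcont, φsupp⟩ := exists_cc_approx ρ hp0 hp2 hgρ hε
  refine ⟨φ, φcont, φsupp, ?_, ?_⟩
  · calc eLpNorm (fun x => g x - φ x) p μ
        ≤ eLpNorm (fun x => g x - φ x) p ρ :=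
          eLpNorm_mono_measure _ (Measure.le_add_right le_rfl)
    _ = eLpNorm (g - φ) p ρ := rfl
    _ ≤ ε := φnorm
  · have e1 : (fun x => f x * g x - f x * φ x) = fun x => f x * (g x - φ x) := by
      funext x; ring
    rw [e1]
    have e2 : eLpNorm (fun x => f x * (g x - φ x)) p μ = eLpNorm (g - φ) p ν := by
      rw [eLpNorm_eq_lintegral_rpow_enorm_toReal hp0 hp2,
        eLpNorm_eq_lintegral_rpow_enorm_toReal hp0 hp2]
      congr 1
      exact (key (fun x => g x - φ x) (hg.1.sub φcont.aestronglyMeasurable)).symm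
    rw [e2]
    calc eLpNorm (g - φ) p ν ≤ eLpNorm (g - φ) p ρ :=
        eLpNorm_mono_measure _ (Measure.le_add_left le_rfl)
    _ ≤ ε := φnorm

/-- Let `X` be locally compact Hausdorff with regular Borel
measure `μ`, `1 < p < ∞`, and `f, g ∈ L^p(X,μ)`. Then `f·g ∈ L^p(X,μ)` if and
only if there is a sequence `(g_n) ⊂ C₀(X)` with `g_n → g` in `L^p` such that
`(f·g_n)` converges in `L^p`; in that case the limit of `(f·g_n)` is `f·g`. -/
theorem mul_mem_lp_iff_approx
    {X : Type*} [MeasurableSpace X] [TopologicalSpace X] [LocallyCompactSpace X]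
    [T2Space X] [BorelSpace X] (μ : Measure X) [μ.Regular]
    (p : ℝ≥0∞) (hp1 : 1 < p) (hp2 : p ≠ ∞)
    (f g : X → ℂ) (hf : MemLp f p μ) (hg : MemLp g p μ) :
    (MemLp (fun x => f x * g x) p μ ↔
      ∃ gn : ℕ → C₀(X, ℂ),
        Tendsto (fun n => eLpNorm (fun x => g x - gn n x) p μ) atTop (𝓝 0) ∧
        ∃ h : X → ℂ, MemLp h p μ ∧
          Tendsto (fun n => eLpNorm (fun x => f x * gn n x - h x) p μ)
            atTop (𝓝 0)) ∧
    ∀ (gn : ℕ → C₀(X, ℂ)) (h : X → ℂ), MemLp h p μ →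
      Tendsto (fun n => eLpNorm (fun x => g x - gn n x) p μ) atTop (𝓝 0) →
      Tendsto (fun n => eLpNorm (fun x => f x * gn n x - h x) p μ)
        atTop (𝓝 0) →
      h =ᵐ[μ] fun x => f x * g x := by
  have hp0 : p ≠ 0 := (lt_of_lt_of_le zero_lt_one hp1.le).ne'
  have uniq : ∀ (gn : ℕ → C₀(X, ℂ)) (h : X → ℂ), MemLp h p μ →
      Tendsto (fun n => eLpNorm (fun x => g x - gn n x) p μ) atTop (𝓝 0) →
      Tendsto (fun n => eLpNorm (fun x => f x * gn n x - h x) p μ) atTop (𝓝 0) →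
      h =ᵐ[μ] fun x => f x * g x := by
    intro gn h hh h1 h2
    exact limit_unique_aux hp0 hf.1 hg.1 gn h hh.1 h1 h2
  refine ⟨⟨fun hfg => ?_, fun hex => ?_⟩, uniq⟩
  · -- forward direction
    have hstep : ∀ n : ℕ, ∃ φ : X → ℂ, Continuous φ ∧ HasCompactSupport φ ∧
        eLpNorm (fun x => g x - φ x) p μ ≤ (((n + 1 : ℕ) : ℝ≥0∞))⁻¹ ∧
        eLpNorm (fun x => f x * g x - f x * φ x) p μ ≤ (((n + 1 : ℕ) : ℝ≥0∞))⁻¹ := by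
      intro n
      refine approx_step μ p hp0 hp2 f g hf hg hfg ?_
      simp [ENNReal.inv_ne_zero]
    choose φ hcont hsupp hb1 hb2 using hstep
    have hlim : Tendsto (fun n : ℕ => (((n + 1 : ℕ) : ℝ≥0∞))⁻¹) atTop (𝓝 0) :=
      ENNReal.tendsto_inv_nat_nhds_zero.comp (tendsto_add_atTop_nat 1)
    refine ⟨fun n => ⟨⟨φ n, hcont n⟩, (hsupp n).is_zero_at_infty⟩, ?_,
      (fun x => f x * g x), hfg, ?_⟩
    · exact tendsto_of_tendsto_of_tendsto_of_le_of_le tendsto_const_nhds hlim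
        (fun n => zero_le) (fun n => hb1 n)
    · refine tendsto_of_tendsto_of_tendsto_of_le_of_le tendsto_const_nhds hlim
        (fun n => zero_le) (fun n => ?_)
      have e : (fun x => f x * φ n x - f x * g x)
          = -(fun x => f x * g x - f x * φ n x) := by
        funext x; simp
      calc eLpNorm (fun x => f x * φ n x - f x * g x) p μ
          = eLpNorm (fun x => f x * g x - f x * φ n x) p μ := by
            rw [e, eLpNorm_neg]
      _ ≤ _ := hb2 n
  · obtain ⟨gn, h1, h, hh, h2⟩ := hex
    exact MemLp.ae_eq (uniq gn h hh h1 h2) hh
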